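/- Assume: (i) for each x ∈ I and 0 ≤ i ≤ L the partial derivative ∂_x^i F(x,y) exists for all y ∈ B and y ↦ ∂_x^i F(x,y) is integrable on B; (ii) the function 𝓘(x) = ∫_B F(x,y) dy is L times differentiable on I and differentiation under the integral sign is valid, i.e., 𝓘^{(i)}(x) = ∫_B ∂_x^i F(x,y) dy for all x ∈ I and 0 ≤ i ≤ L; (iii) for each x ∈ I, every G_j(x,·) is continuous on B, differentiable at every point of the interior of B, and y ↦ ∑_{j=1}^{d} ∂_{y_j} G_j(x,y) is integrable on B; (iv) for every x ∈ I and every y in the interior of B, ∑_{i=0}^{L} e_i(x)·∂_x^i F(x,y) = ∑_{j=1}^{d} ∂_{y_j} G_j(x,y); (v) for each j and x ∈ I, G_j(x,y) = 0 for every y ∈ B whose j-th coordinate y_j equals u_j or o_j. Then for every x ∈ I, ∑_{i=0}^{L} e_i(x)·𝓘^{(i)}(x) = 0. -/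

import Mathlib

open MeasureTheory

/-- If the integrand satisfies the continuous Almkvist–Zeilberger integrand differential
equation and the certificates vanish on the boundary faces, then the parametric integral
satisfies the homogeneous linear ODE `∑ e_i(x) D_x^i 𝓘(x) = 0`. -/
theorem parametric_box_integral_homogeneous_ODE
    (d L : ℕ) (hd : 1 ≤ d)
    (I : Set ℝ) (hIopen : IsOpen I) (hIconn : I.OrdConnected)
    (u o : Fin d → ℝ) (huo : ∀ j, u j < o j)
    (e : Fin (L + 1) → ℝ → ℝ)
    (F : ℝ → (Fin d → ℝ) → ℝ)
    (G : Fin d → ℝ → (Fin d → ℝ) → ℝ)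
    (𝓘 : ℝ → ℝ) (h𝓘 : ∀ x, 𝓘 x = ∫ y in Set.Icc u o, F x y)
    (hFsmooth : ∀ x ∈ I, ∀ y ∈ Set.Icc u o, ContDiffAt ℝ L (fun τ : ℝ => F τ y) x)
    (hFint : ∀ x ∈ I, ∀ i ≤ L,
      IntegrableOn (fun y => iteratedDeriv i (fun τ : ℝ => F τ y) x) (Set.Icc u o) volume)
    (h𝓘smooth : ∀ x ∈ I, ContDiffAt ℝ L 𝓘 x)
    (h𝓘deriv : ∀ x ∈ I, ∀ i ≤ L,
      iteratedDeriv i 𝓘 x = ∫ y in Set.Icc u o, iteratedDeriv i (fun τ : ℝ => F τ y) x)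
    (hGcont : ∀ j, ∀ x ∈ I, ContinuousOn (G j x) (Set.Icc u o))
    (hGdiff : ∀ j, ∀ x ∈ I, ∀ y ∈ interior (Set.Icc u o), DifferentiableAt ℝ (G j x) y)
    (hdiv : ∀ x ∈ I, IntegrableOn
      (fun y => ∑ j : Fin d, fderiv ℝ (G j x) y (Pi.single j (1 : ℝ))) (Set.Icc u o) volume)
    (heq : ∀ x ∈ I, ∀ y ∈ interior (Set.Icc u o),
      ∑ i : Fin (L + 1), e i x * iteratedDeriv (i : ℕ) (fun τ : ℝ => F τ y) x
        = ∑ j : Fin d, fderiv ℝ (G j x) y (Pi.single j (1 : ℝ)))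
    (hbd : ∀ j, ∀ x ∈ I, ∀ y ∈ Set.Icc u o, (y j = u j ∨ y j = o j) → G j x y = 0) :
    ∀ x ∈ I, ∑ i : Fin (L + 1), e i x * iteratedDeriv (i : ℕ) 𝓘 x = 0 := by
  intro x hx
  obtain ⟨n, rfl⟩ : ∃ n, d = n + 1 := ⟨d - 1, by omega⟩
  -- interior of the box
  have hint : interior (Set.Icc u o) = Set.pi Set.univ fun i => Set.Ioo (u i) (o i) := by
    rw [← Set.pi_univ_Icc, interior_pi_set Set.finite_univ]
    simp [interior_Icc]
  -- Step 1: express the LHS as an integral of the combined integrand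
  have h1 : ∑ i : Fin (L + 1), e i x * iteratedDeriv (i : ℕ) 𝓘 x
      = ∫ y in Set.Icc u o, ∑ i : Fin (L + 1),
          e i x * iteratedDeriv (i : ℕ) (fun τ : ℝ => F τ y) x := by
    rw [MeasureTheory.integral_finset_sum]
    · refine Finset.sum_congr rfl fun i _ => ?_
      rw [h𝓘deriv x hx i (Fin.is_le i), MeasureTheory.integral_const_mul]
    · intro i _
      exact (hFint x hx i (Fin.is_le i)).const_mul _
  -- Step 2: the combined integrand agrees a.e. with the divergence
  have h2 : (∫ y in Set.Icc u o, ∑ i : Fin (L + 1),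
        e i x * iteratedDeriv (i : ℕ) (fun τ : ℝ => F τ y) x)
      = ∫ y in Set.Icc u o, ∑ j : Fin (n + 1),
          fderiv ℝ (G j x) y (Pi.single j (1 : ℝ)) := by
    have hae : (Set.pi Set.univ fun i => Set.Ioo (u i) (o i)) =ᵐ[volume] Set.Icc u o := by
      rw [MeasureTheory.volume_pi]
      exact MeasureTheory.Measure.univ_pi_Ioo_ae_eq_Icc
    rw [← MeasureTheory.setIntegral_congr_set hae, ← MeasureTheory.setIntegral_congr_set hae]
    refine MeasureTheory.setIntegral_congr_fun (MeasurableSet.univ_pi fun i => measurableSet_Ioo)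
      fun y hy => ?_
    exact heq x hx y (by rw [hint]; exact hy)
  -- Step 3: divergence theorem, with vanishing boundary terms
  have h3 : (∫ y in Set.Icc u o, ∑ j : Fin (n + 1),
        fderiv ℝ (G j x) y (Pi.single j (1 : ℝ))) = 0 := by
    have hle : u ≤ o := fun j => (huo j).le
    rw [MeasureTheory.integral_divergence_of_hasFDerivAt_off_countable' u o hle
        (fun j => G j x) (fun j y => fderiv ℝ (G j x) y) ∅ Set.countable_empty
        (fun j => hGcont j x hx)
        (fun y hy j => (hGdiff j x hx y (by rw [hint]; exact hy.1)).hasFDerivAt)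
        (hdiv x hx)]
    refine Finset.sum_eq_zero fun j _ => ?_
    have hz : ∀ (c : ℝ), c ∈ Set.Icc (u j) (o j) → (c = u j ∨ c = o j) →
        (∫ z in Set.Icc (u ∘ j.succAbove) (o ∘ j.succAbove), G j x (j.insertNth c z)) = 0 := by
      intro c hc hco
      rw [MeasureTheory.setIntegral_congr_fun measurableSet_Icc
        (g := fun _ => (0 : ℝ)) ?_, MeasureTheory.integral_const, smul_zero]
      intro z hz
      have hmem : j.insertNth c z ∈ Set.Icc u o := Fin.insertNth_mem_Icc.2 ⟨hc, hz⟩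
      refine hbd j x hx _ hmem ?_
      simpa using hco
    rw [hz (o j) (Set.right_mem_Icc.2 (huo j).le) (Or.inr rfl),
        hz (u j) (Set.left_mem_Icc.2 (huo j).le) (Or.inl rfl), sub_zero]
  rw [h1, h2, h3]
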